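/- Let G be a bipartite graph with parts of size at least k each (k ≥ 3), and suppose G contains no path on 2k vertices. If G is connected, then the minimum degree of G is at most k−1. -/

import Mathlib

/-- `G` contains a path on `m` vertices (as a subgraph). -/
def HasPathOn {V : Type*} (G : SimpleGraph V) (m : ℕ) : Prop :=
  ∃ f : Fin m → V, Function.Injective f ∧
    ∀ (i : ℕ) (h : i + 1 < m), G.Adj (f ⟨i, Nat.lt_of_succ_lt h⟩) (f ⟨i + 1, h⟩)

lemma hasPathOn_mono {V : Type*} (G : SimpleGraph V) {m n : ℕ}
    (h : HasPathOn G m) (hnm : n ≤ m) : HasPathOn G n := by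
  obtain ⟨f, hinj, hadj⟩ := h
  refine ⟨fun i => f (Fin.castLE hnm i), fun a b hab => ?_, fun i h => hadj i (lt_of_lt_of_le h hnm)⟩
  exact Fin.castLE_injective hnm (hinj hab)

/-- A connected bipartite graph with both parts of size at least `k ≥ 3` and
no path on `2k` vertices has a vertex of degree at most `k - 1`. -/
theorem stmt0 {V : Type*} [Fintype V] [DecidableEq V] (G : SimpleGraph V)
    [DecidableRel G.Adj] (k : ℕ) (hk : 3 ≤ k) (c : V → Bool)
    (hbip : ∀ u v, G.Adj u v → c u ≠ c v)
    (hA : k ≤ (Finset.univ.filter fun v => c v = true).card)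
    (hB : k ≤ (Finset.univ.filter fun v => c v = false).card)
    (hnopath : ¬ HasPathOn G (2 * k))
    (hconn : G.Connected) :
    ∃ v : V, G.degree v ≤ k - 1 := by
  classical
  set N := Fintype.card V with hN
  have hbound : ∀ m, HasPathOn G m → m ≤ N := by
    rintro m ⟨f, hinj, -⟩
    simpa using Fintype.card_le_of_injective f hinj
  have hV : 0 < (Finset.univ.filter fun v => c v = true).card := by omega
  obtain ⟨v0, -⟩ := Finset.card_pos.mp hV
  have hP1 : HasPathOn G 1 :=
    ⟨fun _ => v0, fun a b _ => Subsingleton.elim a b, fun i h => absurd h (by omega)⟩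
  set M := Nat.findGreatest (HasPathOn G) N with hMdef
  have hM1 : 1 ≤ M := Nat.le_findGreatest (hbound 1 hP1) hP1
  have hPM : HasPathOn G M := Nat.findGreatest_spec (hbound 1 hP1) hP1
  have hnot : ¬ HasPathOn G (M + 1) := by
    by_cases hle : M + 1 ≤ N
    · exact Nat.findGreatest_is_greatest (by omega) hle
    · exact fun h => absurd (hbound _ h) (by omega)
  have hMlt : M < 2 * k := by
    by_contra h
    exact hnopath (hasPathOn_mono G hPM (by omega))
  obtain ⟨f, hinj, hadj⟩ := hPM
  have h0 : 0 < M := hM1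
  set v : V := f ⟨0, h0⟩ with hv
  have hcol : ∀ i (h : i < M), c (f ⟨i, h⟩) = if i % 2 = 0 then c v else !(c v) := by
    intro i
    induction i with
    | zero => intro h; simp [hv]
    | succ i ih =>
      intro h
      have hi : i < M := by omega
      have hne := hbip _ _ (hadj i h)
      have hstep : c (f ⟨i + 1, h⟩) = !(c (f ⟨i, hi⟩)) := by
        cases hc1 : c (f ⟨i + 1, h⟩) <;> cases hc2 : c (f ⟨i, hi⟩) <;> simp_all
      rcases Nat.mod_two_eq_zero_or_one i with h2 | h2
      · have h3 : (i + 1) % 2 = 1 := by omega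
        simp [h3, hstep, ih hi, h2]
      · have h3 : (i + 1) % 2 = 0 := by omega
        simp [h3, hstep, ih hi, h2]
  have hrange : ∀ w, G.Adj v w → ∃ i : Fin M, f i = w := by
    intro w hw
    by_contra hcon
    push_neg at hcon
    apply hnot
    refine ⟨fun j => if hj : (j : ℕ) = 0 then w else f ⟨(j : ℕ) - 1, by omega⟩, ?_, ?_⟩
    · intro a b hab
      by_cases ha : (a : ℕ) = 0 <;> by_cases hb : (b : ℕ) = 0
      · exact Fin.ext (by omega)
      · simp only [dif_pos ha, dif_neg hb] at hab
        exact absurd hab.symm (hcon _)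
      · simp only [dif_neg ha, dif_pos hb] at hab
        exact absurd hab (hcon _)
      · simp only [dif_neg ha, dif_neg hb] at hab
        have := Fin.mk.injEq .. ▸ hinj hab
        exact Fin.ext (by omega)
    · intro i hi
      by_cases h0i : i = 0
      · subst h0i
        simp only
        rw [dif_pos trivial, dif_neg (by simp)]
        exact hw.symm
      · simp only
        rw [dif_neg (by simpa using h0i), dif_neg (by simp)]
        have hlt : (i - 1) + 1 < M := by omega
        have := hadj (i - 1) hlt
        convert this using 3 <;> omega
  have hodd : ∀ w ∈ G.neighborFinset v, ∃ i : Fin M, f i = w ∧ (i : ℕ) % 2 = 1 := by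
    intro w hw
    rw [SimpleGraph.mem_neighborFinset] at hw
    obtain ⟨i, hfi⟩ := hrange w hw
    refine ⟨i, hfi, ?_⟩
    have hne := hbip _ _ hw
    have hci := hcol i i.isLt
    by_contra hodd'
    have h2 : (i : ℕ) % 2 = 0 := by omega
    rw [h2] at hci
    simp only [if_pos rfl] at hci
    rw [Fin.eta, hfi] at hci
    exact hne hci.symm
  refine ⟨v, ?_⟩
  have hsub : G.neighborFinset v ⊆
      (Finset.univ.filter fun i : Fin M => (i : ℕ) % 2 = 1).image f := by
    intro w hw
    obtain ⟨i, hfi, hio⟩ := hodd w hw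
    exact Finset.mem_image.mpr ⟨i, by simp [hio], hfi⟩
  have hcard : ((Finset.univ.filter fun i : Fin M => (i : ℕ) % 2 = 1)).card ≤ k - 1 := by
    have := Finset.card_le_card_of_injOn (fun i : Fin M => (i : ℕ) / 2)
      (s := Finset.univ.filter fun i : Fin M => (i : ℕ) % 2 = 1)
      (t := Finset.range (k - 1))
      (fun i hi => by
        simp only [Finset.mem_coe, Finset.mem_filter] at hi
        have := i.isLt
        simp only [Finset.mem_coe, Finset.mem_range]
        omega)
      (fun a ha b hb hab => by
        have ha' : (a : ℕ) % 2 = 1 := by simpa using ha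
        have hb' : (b : ℕ) % 2 = 1 := by simpa using hb
        have hab' : (a : ℕ) / 2 = (b : ℕ) / 2 := hab
        exact Fin.ext (by omega))
    exact (Finset.card_range (k - 1)) ▸ this
  calc G.degree v = (G.neighborFinset v).card := rfl
    _ ≤ ((Finset.univ.filter fun i : Fin M => (i : ℕ) % 2 = 1).image f).card :=
        Finset.card_le_card hsub
    _ ≤ ((Finset.univ.filter fun i : Fin M => (i : ℕ) % 2 = 1)).card :=
        Finset.card_image_le
    _ ≤ k - 1 := hcard
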